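/- Let G be a bipartite multigraph in 𝒢_{0,m2} with m2 ≤ S_2·T_2/M². Let b_d(G,∅) denote the number of simple ordered 2-paths of G whose middle vertex lies in Y, i.e. ordered triples (u,v,w) with u,w ∈ X distinct, v ∈ Y, and uv, wv simple edges. Then T_2·(1 − 4·m2·Δ/T_2) ≤ b_d(G,∅) ≤ T_2, i.e. T_2 − 4·m2·Δ ≤ b_d(G,∅) ≤ T_2. -/

import Mathlib

open Finset

/-- **Bipartite bounds on `b_d(G, ∅)`.**
`G` is a bipartite multigraph with parts `X = Fin m` (degrees `s`) and
`Y = Fin n` (degrees `t`), multiplicity function `mG`, exactly `m2` double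
edges and no edge of multiplicity `≥ 3`, with `m2 ≤ S₂·T₂/M²`.  `b_d(G,∅)` is
the number of simple ordered 2-paths `(u,v,w)` with `u, w ∈ X` distinct,
`v ∈ Y`, and `uv`, `wv` simple edges.  Then
`T₂ − 4·m2·Δ ≤ b_d(G,∅) ≤ T₂`. -/
theorem bipartite_bd_empty_bounds (m n : ℕ)
    (s : Fin m → ℕ) (t : Fin n → ℕ) (mG : Fin m → Fin n → ℕ)
    (M S2 T2 Δ m2 : ℕ)
    (hs : ∀ x, ∑ y, mG x y = s x)
    (ht : ∀ y, ∑ x, mG x y = t y)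
    (hM : M = ∑ x, s x)
    (hMt : M = ∑ y, t y)
    (hS2 : S2 = ∑ x, s x * (s x - 1))
    (hT2 : T2 = ∑ y, t y * (t y - 1))
    (hΔ : Δ = max (Finset.univ.sup s) (Finset.univ.sup t))
    (hmul : ∀ x y, mG x y ≤ 2)
    (hm2 : m2 = Set.ncard {q : Fin m × Fin n | mG q.1 q.2 = 2})
    (hm2le : (m2 : ℝ) ≤ (S2 : ℝ) * T2 / (M : ℝ) ^ 2)
    (bd0 : ℕ)
    (hbd0 : bd0 = Set.ncard {tr : Fin m × Fin n × Fin m |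
      tr.1 ≠ tr.2.2 ∧ mG tr.1 tr.2.1 = 1 ∧ mG tr.2.2 tr.2.1 = 1}) :
    (T2 : ℝ) - 4 * m2 * Δ ≤ (bd0 : ℝ) ∧ bd0 ≤ T2 := by
  classical
  have sq : ∀ x : ℕ, x * x - x = x * (x - 1) := by
    intro x
    cases x with
    | zero => simp
    | succ k => rw [Nat.succ_sub_one, Nat.mul_succ, Nat.add_sub_cancel]
  have castsq : ∀ x : ℕ, ((x * (x - 1) : ℕ) : ℝ) = (x : ℝ) * x - x := by
    intro x
    cases x with
    | zero => simp
    | succ k => rw [Nat.succ_sub_one]; push_cast; ring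
  set A : Fin n → Finset (Fin m) := fun v => univ.filter (fun u => mG u v = 1) with hA
  set D : Fin n → Finset (Fin m) := fun v => univ.filter (fun u => mG u v = 2) with hD
  -- degree decomposition
  have htv : ∀ v, t v = (A v).card + 2 * (D v).card := by
    intro v
    have hpt : ∀ u : Fin m, mG u v =
        (if mG u v = 1 then 1 else 0) + 2 * (if mG u v = 2 then 1 else 0) := by
      intro u; have := hmul u v; interval_cases h : mG u v <;> simp
    have c1 : (A v).card = ∑ u, (if mG u v = 1 then 1 else 0) := by
      rw [hA]; exact Finset.card_filter _ _
    have c2 : (D v).card = ∑ u, (if mG u v = 2 then 1 else 0) := by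
      rw [hD]; exact Finset.card_filter _ _
    rw [← ht v, c1, c2, Finset.mul_sum, ← Finset.sum_add_distrib]
    exact Finset.sum_congr rfl (fun u _ => hpt u)
  -- m2 as a sum
  have hm2' : m2 = ∑ v, (D v).card := by
    rw [hm2, Set.ncard_eq_toFinset_card', Set.toFinset_setOf]
    rw [Finset.card_eq_sum_card_fiberwise (fun q _ => Finset.mem_univ q.2)]
    refine Finset.sum_congr rfl fun v _ => ?_
    rw [show ((univ.filter fun q : Fin m × Fin n => mG q.1 q.2 = 2).filter
        fun q => q.2 = v) = (D v).map ⟨fun u => (u, v), fun a b h => (Prod.mk.injEq _ _ _ _ ▸ h).1⟩ from ?_]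
    · rw [Finset.card_map]
    · ext ⟨u, w⟩
      simp only [Finset.mem_filter, Finset.mem_univ, true_and, Finset.mem_map,
        Function.Embedding.coeFn_mk, hD, Prod.mk.injEq]
      constructor
      · rintro ⟨h1, rfl⟩; exact ⟨u, by simpa using h1, rfl⟩
      · rintro ⟨u', hu', rfl, rfl⟩; simpa using hu'
  -- bd0 as a sum
  have hbd' : bd0 = ∑ v, (A v).card * ((A v).card - 1) := by
    rw [hbd0, Set.ncard_eq_toFinset_card', Set.toFinset_setOf]
    rw [Finset.card_eq_sum_card_fiberwise
      (f := fun tr : Fin m × Fin n × Fin m => tr.2.1) (fun q _ => Finset.mem_univ _)]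
    refine Finset.sum_congr rfl fun v _ => ?_
    rw [show ((univ.filter fun tr : Fin m × Fin n × Fin m =>
        tr.1 ≠ tr.2.2 ∧ mG tr.1 tr.2.1 = 1 ∧ mG tr.2.2 tr.2.1 = 1).filter
        fun tr => tr.2.1 = v)
        = (A v).offDiag.map ⟨fun p => (p.1, v, p.2), by
            intro a b h
            simp only [Prod.mk.injEq] at h
            exact Prod.ext h.1 h.2.2⟩ from ?_]
    · rw [Finset.card_map, Finset.offDiag_card, sq]
    · ext ⟨u, w, u'⟩
      simp only [Finset.mem_filter, Finset.mem_univ, true_and, Finset.mem_map,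
        Finset.mem_offDiag, Function.Embedding.coeFn_mk, Prod.mk.injEq, hA]
      constructor
      · rintro ⟨⟨hne, h1, h2⟩, rfl⟩
        exact ⟨(u, u'), ⟨by simpa using h1, by simpa using h2, hne⟩, rfl⟩
      · rintro ⟨⟨a, b⟩, ⟨ha, hb, hab⟩, rfl, rfl, rfl⟩
        exact ⟨⟨hab, by simpa using ha, by simpa using hb⟩, rfl⟩
  -- t v ≤ Δ
  have htΔ : ∀ v, t v ≤ Δ := fun v =>
    hΔ ▸ le_trans (Finset.le_sup (Finset.mem_univ v)) (le_max_right _ _)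
  -- upper bound
  have upper : ∀ v, (A v).card * ((A v).card - 1) ≤ t v * (t v - 1) := by
    intro v
    have h := htv v
    exact Nat.mul_le_mul (by omega) (by omega)
  have hub : bd0 ≤ T2 := by
    rw [hbd', hT2]; exact Finset.sum_le_sum fun v _ => upper v
  refine ⟨?_, hub⟩
  -- lower bound, in ℝ
  have lowerR : ∀ v, ((t v * (t v - 1) : ℕ) : ℝ) ≤
      (((A v).card * ((A v).card - 1) : ℕ) : ℝ) + 4 * (D v).card * Δ := by
    intro v
    rw [castsq, castsq]
    have h : (t v : ℝ) = (A v).card + 2 * (D v).card := by exact_mod_cast htv v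
    have hΔ' : (t v : ℝ) ≤ Δ := by exact_mod_cast htΔ v
    have hd0 : (0 : ℝ) ≤ ((D v).card : ℝ) := Nat.cast_nonneg _
    nlinarith [mul_nonneg hd0 (sub_nonneg.mpr hΔ')]
  have hT2R : (T2 : ℝ) = ∑ v, ((t v * (t v - 1) : ℕ) : ℝ) := by
    rw [hT2, Nat.cast_sum]
  have hbdR : (bd0 : ℝ) = ∑ v, (((A v).card * ((A v).card - 1) : ℕ) : ℝ) := by
    rw [hbd', Nat.cast_sum]
  have hm2R : (m2 : ℝ) = ∑ v, ((D v).card : ℝ) := by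
    rw [hm2', Nat.cast_sum]
  have key : (T2 : ℝ) ≤ (bd0 : ℝ) + 4 * m2 * Δ := by
    rw [hT2R, hbdR, hm2R]
    calc ∑ v, ((t v * (t v - 1) : ℕ) : ℝ)
        ≤ ∑ v, ((((A v).card * ((A v).card - 1) : ℕ) : ℝ) + 4 * (D v).card * Δ) :=
          Finset.sum_le_sum fun v _ => lowerR v
      _ = (∑ v, (((A v).card * ((A v).card - 1) : ℕ) : ℝ)) +
            4 * (∑ v, ((D v).card : ℝ)) * Δ := by
          rw [Finset.sum_add_distrib, Finset.mul_sum, Finset.sum_mul]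
  linarith
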